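/- arXiv:2101.03333 — 14 statements merged into one kernel-verified Lean document; each statement's English description precedes it below -/
import Mathlib

section
/- Let (G, ·, e, α) be a regular Hom-group. If an element g ∈ G satisfies g·g = α(g) and α(α(g)) = g, then g = e. -/
/-- A Hom-group `(G, ·, e, α)` with inverse map `inv`. -/
structure HomGroup (G : Type*) where
  mul : G → G → G
  e : G
  α : G → G
  inv : G → G
  hom_assoc : ∀ g h k, mul (α g) (mul h k) = mul (mul g h) (α k)
  α_mul : ∀ g h, α (mul g h) = mul (α g) (α h)
  mul_e : ∀ g, mul g e = α g
  e_mul : ∀ g, mul e g = α g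
  α_e : α e = e
  inv_anti : ∀ g h, inv (mul g h) = mul (inv h) (inv g)
  exists_inv_index : ∀ g, ∃ k,
    (α)^[k] (mul g (inv g)) = e ∧ (α)^[k] (mul (inv g) g) = e

/-- A Hom-group is regular when `α` is bijective; then the invertibility
condition simplifies to `g·g⁻¹ = g⁻¹·g = e`. -/
def HomGroup.IsRegular {G : Type*} (H : HomGroup G) : Prop :=
  Function.Bijective H.α ∧ ∀ g, H.mul g (H.inv g) = H.e ∧ H.mul (H.inv g) g = H.e

/-- `g` has invertibility index `n`: `n` is the smallest natural number with
`α^n(g·g⁻¹) = α^n(g⁻¹·g) = e`. -/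
def HomGroup.HasInvIndex {G : Type*} (H : HomGroup G) (g : G) (n : ℕ) : Prop :=
  ((H.α)^[n] (H.mul g (H.inv g)) = H.e ∧ (H.α)^[n] (H.mul (H.inv g) g) = H.e) ∧
    ∀ m, ((H.α)^[m] (H.mul g (H.inv g)) = H.e ∧ (H.α)^[m] (H.mul (H.inv g) g) = H.e) → n ≤ m

/-- A Hom-subgroup: a subset containing `e`, closed under inverses and products. -/
def HomGroup.IsHomSubgroup {G : Type*} (Hg : HomGroup G) (H : Set G) : Prop :=
  Hg.e ∈ H ∧ (∀ h ∈ H, Hg.inv h ∈ H) ∧ ∀ h₁ ∈ H, ∀ h₂ ∈ H, Hg.mul h₁ h₂ ∈ H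

theorem stmt0 {G : Type*} (H : HomGroup G) (hreg : H.IsRegular)
    (g : G) (h1 : H.mul g g = H.α g) (h2 : H.α (H.α g) = g) :
    g = H.e := by
  have hinv : H.mul g (H.inv g) = H.e := (hreg.2 g).1
  calc g = H.α (H.α g) := h2.symm
    _ = H.mul (H.α g) H.e := (H.mul_e _).symm
    _ = H.mul (H.α g) (H.mul g (H.inv g)) := by rw [hinv]
    _ = H.mul (H.mul g g) (H.α (H.inv g)) := H.hom_assoc _ _ _
    _ = H.mul (H.α g) (H.α (H.inv g)) := by rw [h1]
    _ = H.α (H.mul g (H.inv g)) := (H.α_mul _ _).symm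
    _ = H.e := by rw [hinv, H.α_e]
end

section
/- Let (G, ·, e, α) be a Hom-group and let g ∈ G be an element of invertibility index n (i.e. n is the smallest natural number with α^n(g·g⁻¹) = α^n(g⁻¹·g) = e). If h, k ∈ G satisfy α^i(g)·h = α^i(g)·k for all i ≥ n, then α²(h) = α²(k). -/
lemma HomGroup.iter_mul {G : Type*} (H : HomGroup G) (n : ℕ) (a b : G) :
    (H.α)^[n] (H.mul a b) = H.mul ((H.α)^[n] a) ((H.α)^[n] b) := by
  induction n with
  | zero => rfl
  | succ m ih =>
    rw [Function.iterate_succ_apply', ih, H.α_mul,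
      Function.iterate_succ_apply', Function.iterate_succ_apply']

theorem stmt1 {G : Type*} (H : HomGroup G) (g : G) (n : ℕ)
    (hg : H.HasInvIndex g n) (h k : G)
    (hyp : ∀ i, n ≤ i → H.mul ((H.α)^[i] g) h = H.mul ((H.α)^[i] g) k) :
    H.α (H.α h) = H.α (H.α k) := by
  have h1 : H.mul ((H.α)^[n] (H.inv g)) ((H.α)^[n] g) = H.e := by
    rw [← H.iter_mul]; exact hg.1.2
  have h2 := hyp n le_rfl
  calc H.α (H.α h) = H.mul H.e (H.α h) := (H.e_mul _).symm
    _ = H.mul (H.mul ((H.α)^[n] (H.inv g)) ((H.α)^[n] g)) (H.α h) := by rw [h1]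
    _ = H.mul (H.α ((H.α)^[n] (H.inv g))) (H.mul ((H.α)^[n] g) h) :=
        (H.hom_assoc _ _ _).symm
    _ = H.mul (H.α ((H.α)^[n] (H.inv g))) (H.mul ((H.α)^[n] g) k) := by rw [h2]
    _ = H.mul (H.mul ((H.α)^[n] (H.inv g)) ((H.α)^[n] g)) (H.α k) :=
        H.hom_assoc _ _ _
    _ = H.mul H.e (H.α k) := by rw [h1]
    _ = H.α (H.α k) := H.e_mul _
end

section
/- Let (G, ·, e, α) be a Hom-group, let g ∈ G have invertibility index n and let l ∈ G have invertibility index m. If h, k ∈ G satisfy (α^i(g)·h)·(k·α^j(l)) = (α^i(g)·k)·(h·α^j(l)) for all i ≥ n and all j ≥ m, then α³(h·k) = α³(k·h). -/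
theorem stmt2 {G : Type*} (H : HomGroup G) (g l : G) (n m : ℕ)
    (hg : H.HasInvIndex g n) (hl : H.HasInvIndex l m) (h k : G)
    (hyp : ∀ i, n ≤ i → ∀ j, m ≤ j →
      H.mul (H.mul ((H.α)^[i] g) h) (H.mul k ((H.α)^[j] l)) =
        H.mul (H.mul ((H.α)^[i] g) k) (H.mul h ((H.α)^[j] l))) :
    (H.α)^[3] (H.mul h k) = (H.α)^[3] (H.mul k h) := by
  obtain ⟨⟨hg1, hg2⟩, -⟩ := hg
  obtain ⟨⟨hl1, hl2⟩, -⟩ := hl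
  have itmul : ∀ (t : ℕ) (x y : G),
      (H.α)^[t] (H.mul x y) = H.mul ((H.α)^[t] x) ((H.α)^[t] y) := by
    intro t
    induction t with
    | zero => intro x y; simp
    | succ t ih =>
        intro x y
        rw [Function.iterate_succ_apply', ih, H.α_mul,
          ← Function.iterate_succ_apply' H.α t x,
          ← Function.iterate_succ_apply' H.α t y]
  set a := (H.α)^[n] g with ha_def
  set a' := (H.α)^[n] (H.inv g) with ha'_def
  set b := (H.α)^[m] l with hb_def
  set b' := (H.α)^[m] (H.inv l) with hb'_def
  have ha' : H.mul a' a = H.e := by rw [ha_def, ha'_def, ← itmul]; exact hg2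
  have hb : H.mul b b' = H.e := by rw [hb_def, hb'_def, ← itmul]; exact hl1
  have E := hyp n le_rfl m le_rfl
  -- E : (a·h)·(k·b) = (a·k)·(h·b)
  have cancel_right : ∀ u v : G,
      H.mul (H.mul (H.mul a u) (H.mul v b)) (H.α (H.α b')) =
        H.mul (H.α (H.α a)) (H.α (H.mul u v)) := by
    intro u v
    rw [← H.hom_assoc (H.mul a u) (H.mul v b) (H.α b'),
      ← H.hom_assoc v b b', hb, H.mul_e, H.α_mul, H.α_mul,
      H.hom_assoc (H.α a) (H.α u) (H.α v)]
  have E2 : H.mul (H.α (H.α a)) (H.α (H.mul h k)) =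
      H.mul (H.α (H.α a)) (H.α (H.mul k h)) := by
    rw [← cancel_right h k, ← cancel_right k h, E]
  have cancel_left : ∀ w : G,
      H.mul (H.α (H.α (H.α a'))) (H.mul (H.α (H.α a)) (H.α w)) =
        H.α (H.α (H.α w)) := by
    intro w
    rw [H.hom_assoc (H.α (H.α a')) (H.α (H.α a)) (H.α w),
      ← H.α_mul (H.α a') (H.α a), ← H.α_mul a' a, ha', H.α_e, H.α_e, H.e_mul]
  have final := congrArg (fun z => H.mul (H.α (H.α (H.α a'))) z) E2
  rw [cancel_left, cancel_left] at final
  simpa [Function.iterate_succ_apply', ha_def] using final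
end

section
/- Let (G, ·, e, α) be a Hom-group, let g ∈ G have invertibility index n and let h ∈ G have invertibility index m. If (α^i(g⁻¹)·α^j(h⁻¹))·(α^i(g)·α^j(h)) = e for all i ≥ n and all j ≥ m, then α^{i+5}(g)·α^{j+5}(h) = α^{j+5}(h)·α^{i+5}(g) for all i ≥ n and j ≥ m. -/
namespace HomGroupAux

variable {G : Type*} (Hg : HomGroup G)

lemma iter_mul (k : ℕ) (x y : G) :
    (Hg.α)^[k] (Hg.mul x y) = Hg.mul ((Hg.α)^[k] x) ((Hg.α)^[k] y) := by
  induction k with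
  | zero => rfl
  | succ k ih => simp [Function.iterate_succ_apply', ih, Hg.α_mul]

lemma iter_e (k : ℕ) : (Hg.α)^[k] Hg.e = Hg.e := by
  induction k with
  | zero => rfl
  | succ k ih => simp [Function.iterate_succ_apply', ih, Hg.α_e]

lemma cancel {x y z : G} (hxy : Hg.mul x y = Hg.e) (hyz : Hg.mul y z = Hg.e) :
    Hg.α (Hg.α x) = Hg.α (Hg.α z) := by
  have h1 : Hg.mul (Hg.α x) (Hg.mul y z) = Hg.α (Hg.α x) := by
    rw [hyz, Hg.mul_e]
  have h2 : Hg.mul (Hg.α x) (Hg.mul y z) = Hg.α (Hg.α z) := by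
    rw [Hg.hom_assoc, hxy, Hg.e_mul]
  rw [← h1, h2]

lemma comm5 (a a' b b' : G)
    (haa' : Hg.mul a a' = Hg.e) (ha'a : Hg.mul a' a = Hg.e)
    (hbb' : Hg.mul b b' = Hg.e) (hb'b : Hg.mul b' b = Hg.e)
    (hab : Hg.mul (Hg.mul a' b') (Hg.mul a b) = Hg.e) :
    (Hg.α)^[5] (Hg.mul a b) = (Hg.α)^[5] (Hg.mul b a) := by
  have step1 : Hg.mul (Hg.α (Hg.mul a b)) (Hg.α (Hg.mul b' a')) = Hg.e := by
    rw [Hg.α_mul a b, ← Hg.hom_assoc, Hg.hom_assoc b b' a', hbb', Hg.e_mul,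
      ← Hg.α_mul, ← Hg.α_mul, haa', Hg.α_e, Hg.α_e]
  have step2 : Hg.mul (Hg.α (Hg.mul b a)) (Hg.α (Hg.mul a' b')) = Hg.e := by
    rw [Hg.α_mul b a, ← Hg.hom_assoc, Hg.hom_assoc a a' b', haa', Hg.e_mul,
      ← Hg.α_mul, ← Hg.α_mul, hbb', Hg.α_e, Hg.α_e]
  have step3 : Hg.mul (Hg.α (Hg.mul b' a')) (Hg.α (Hg.mul a b)) = Hg.e := by
    rw [Hg.α_mul b' a', ← Hg.hom_assoc, Hg.hom_assoc a' a b, ha'a, Hg.e_mul,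
      ← Hg.α_mul, ← Hg.α_mul, hb'b, Hg.α_e, Hg.α_e]
  have h4 : Hg.mul (Hg.α (Hg.mul a' b')) (Hg.α (Hg.mul a b)) = Hg.e := by
    rw [← Hg.α_mul, hab, Hg.α_e]
  -- α³(a'b') = α³(b'a')
  have h5 := cancel Hg h4 step1
  -- apply α² to step2 and rewrite using h5
  have h6 : Hg.mul (Hg.α (Hg.α (Hg.α (Hg.mul b a))))
      (Hg.α (Hg.α (Hg.α (Hg.mul b' a')))) = Hg.e := by
    rw [← h5, ← Hg.α_mul, ← Hg.α_mul, step2, Hg.α_e, Hg.α_e]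
  have h7 : Hg.mul (Hg.α (Hg.α (Hg.α (Hg.mul b' a'))))
      (Hg.α (Hg.α (Hg.α (Hg.mul a b)))) = Hg.e := by
    rw [← Hg.α_mul, ← Hg.α_mul, step3, Hg.α_e, Hg.α_e]
  have h8 := cancel Hg h6 h7
  show Hg.α (Hg.α (Hg.α (Hg.α (Hg.α (Hg.mul a b))))) =
    Hg.α (Hg.α (Hg.α (Hg.α (Hg.α (Hg.mul b a)))))
  exact h8.symm

end HomGroupAux

theorem stmt3 {G : Type*} (Hg : HomGroup G) (g h : G) (n m : ℕ)
    (hgn : Hg.HasInvIndex g n) (hhm : Hg.HasInvIndex h m)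
    (hyp : ∀ i, n ≤ i → ∀ j, m ≤ j →
      Hg.mul (Hg.mul ((Hg.α)^[i] (Hg.inv g)) ((Hg.α)^[j] (Hg.inv h)))
        (Hg.mul ((Hg.α)^[i] g) ((Hg.α)^[j] h)) = Hg.e) :
    ∀ i, n ≤ i → ∀ j, m ≤ j →
      Hg.mul ((Hg.α)^[i + 5] g) ((Hg.α)^[j + 5] h) =
        Hg.mul ((Hg.α)^[j + 5] h) ((Hg.α)^[i + 5] g) := by
  intro i hi j hj
  set a := (Hg.α)^[i] g with ha
  set a' := (Hg.α)^[i] (Hg.inv g) with ha'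
  set b := (Hg.α)^[j] h with hb
  set b' := (Hg.α)^[j] (Hg.inv h) with hb'
  have hig : ∀ x : G, (Hg.α)^[n] x = Hg.e → (Hg.α)^[i] x = Hg.e := by
    intro x hx
    obtain ⟨k, rfl⟩ := Nat.exists_eq_add_of_le hi
    rw [add_comm, Function.iterate_add_apply, hx, HomGroupAux.iter_e]
  have hjh : ∀ x : G, (Hg.α)^[m] x = Hg.e → (Hg.α)^[j] x = Hg.e := by
    intro x hx
    obtain ⟨k, rfl⟩ := Nat.exists_eq_add_of_le hj
    rw [add_comm, Function.iterate_add_apply, hx, HomGroupAux.iter_e]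
  have haa' : Hg.mul a a' = Hg.e := by
    rw [ha, ha', ← HomGroupAux.iter_mul]; exact hig _ hgn.1.1
  have ha'a : Hg.mul a' a = Hg.e := by
    rw [ha, ha', ← HomGroupAux.iter_mul]; exact hig _ hgn.1.2
  have hbb' : Hg.mul b b' = Hg.e := by
    rw [hb, hb', ← HomGroupAux.iter_mul]; exact hjh _ hhm.1.1
  have hb'b : Hg.mul b' b = Hg.e := by
    rw [hb, hb', ← HomGroupAux.iter_mul]; exact hjh _ hhm.1.2
  have hab : Hg.mul (Hg.mul a' b') (Hg.mul a b) = Hg.e := hyp i hi j hj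
  have key := HomGroupAux.comm5 Hg a a' b b' haa' ha'a hbb' hb'b hab
  have e1 : (Hg.α)^[i + 5] g = (Hg.α)^[5] a := by
    rw [ha, add_comm, Function.iterate_add_apply]
  have e2 : (Hg.α)^[j + 5] h = (Hg.α)^[5] b := by
    rw [hb, add_comm, Function.iterate_add_apply]
  rw [e1, e2, ← HomGroupAux.iter_mul, ← HomGroupAux.iter_mul, key]
end

section
/- Let (G, ·, e, α) be a regular abelian Hom-group. Then for all g, h, k, l ∈ G one has (g·h)·(k·l) = (g·k)·(h·l). -/
theorem stmt4 {G : Type*} (H : HomGroup G) (hreg : H.IsRegular)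
    (hcomm : ∀ g h, H.mul g h = H.mul h g) :
    ∀ g h k l, H.mul (H.mul g h) (H.mul k l) = H.mul (H.mul g k) (H.mul h l) := by
  have key : ∀ g h k l, H.α (H.mul (H.mul g h) (H.mul k l))
      = H.α (H.mul (H.mul g l) (H.mul h k)) := by
    intro g h k l
    calc H.α (H.mul (H.mul g h) (H.mul k l))
        = H.mul (H.mul (H.α g) (H.α h)) (H.α (H.mul k l)) := by
          rw [H.α_mul, H.α_mul]
      _ = H.mul (H.α (H.α g)) (H.mul (H.α h) (H.mul k l)) := by
          rw [← H.hom_assoc (H.α g) (H.α h) (H.mul k l)]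
      _ = H.mul (H.α (H.α g)) (H.mul (H.mul h k) (H.α l)) := by
          rw [H.hom_assoc h k l]
      _ = H.mul (H.α (H.α g)) (H.mul (H.mul l h) (H.α k)) := by
          rw [hcomm (H.mul h k) (H.α l), H.hom_assoc l h k]
      _ = H.mul (H.mul (H.α g) (H.mul l h)) (H.α (H.α k)) := by
          rw [H.hom_assoc (H.α g) (H.mul l h) (H.α k)]
      _ = H.mul (H.mul (H.mul g l) (H.α h)) (H.α (H.α k)) := by
          rw [H.hom_assoc g l h]
      _ = H.mul (H.α (H.mul g l)) (H.mul (H.α h) (H.α k)) := by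
          rw [← H.hom_assoc (H.mul g l) (H.α h) (H.α k)]
      _ = H.α (H.mul (H.mul g l) (H.mul h k)) := by
          rw [H.α_mul (H.mul g l) (H.mul h k), H.α_mul h k]
  intro g h k l
  apply hreg.1.injective
  rw [key g h k l, key g k h l, hcomm h k]
end

section
/- Let (G, ·, e) be a group, let α : G → G be a group homomorphism, let Z(G) be the center of G, and set Z_α(G) = {g ∈ G : α(g·x) = α(x·g) for all x ∈ G}. Then: (1) Z(G) ⊆ α⁻¹(α(Z(G))) ⊆ Z_α(G); (2) if α is injective then Z(G) = Z_α(G); (3) if α is injective and α(Z(G)) ⊆ Z(G), then Z_α(G) contains e and is closed under the twisted product μ_α(g,h) = α(g·h) and under inverses (so it is a Hom-subgroup of the twist Hom-group G_α = (G, μ_α, e, α)). -/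
/-- `Z_α(G) = {g ∈ G : α(g·x) = α(x·g) for all x ∈ G}`. -/
def Zalpha {G : Type*} [Group G] (α : G →* G) : Set G :=
  {g | ∀ x, α (g * x) = α (x * g)}

theorem stmt7 {G : Type*} [Group G] (α : G →* G) :
    ((Subgroup.center G : Set G) ⊆ (⇑α) ⁻¹' (⇑α '' (Subgroup.center G : Set G)) ∧
      (⇑α) ⁻¹' (⇑α '' (Subgroup.center G : Set G)) ⊆ Zalpha α) ∧
    (Function.Injective α → Zalpha α = (Subgroup.center G : Set G)) ∧
    (Function.Injective α → ⇑α '' (Subgroup.center G : Set G) ⊆ (Subgroup.center G : Set G) →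
      ((1 : G) ∈ Zalpha α ∧
        (∀ g ∈ Zalpha α, ∀ h ∈ Zalpha α, α (g * h) ∈ Zalpha α) ∧
        ∀ g ∈ Zalpha α, g⁻¹ ∈ Zalpha α)) := by
  have hpre : (⇑α) ⁻¹' (⇑α '' (Subgroup.center G : Set G)) ⊆ Zalpha α := by
    rintro g ⟨z, hz, hzg⟩ x
    have hz' := (Subgroup.mem_center_iff.mp hz)
    simp only [map_mul, ← hzg]
    rw [← map_mul, ← map_mul, hz' x]
  have heq : Function.Injective α → Zalpha α = (Subgroup.center G : Set G) := by
    intro hinj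
    ext g
    constructor
    · intro hg
      exact Subgroup.mem_center_iff.mpr fun x => hinj (hg x).symm
    · intro hg x
      rw [Subgroup.mem_center_iff.mp hg x]
  refine ⟨⟨fun g hg => ⟨g, hg, rfl⟩, hpre⟩, heq, fun hinj hsub => ?_⟩
  rw [heq hinj]
  refine ⟨Subgroup.one_mem _, fun g hg h hh => ?_, fun g hg => Subgroup.inv_mem _ hg⟩
  exact hsub ⟨g * h, Subgroup.mul_mem _ hg hh, rfl⟩
end

section
/- Let (G, ·, e, α) be a regular Hom-group and let Z(G) = {g ∈ G : g·x = x·g for all x ∈ G} be its center. Then Z(G) is a normal Hom-subgroup of G: it is a Hom-subgroup and (g·h)·α(g⁻¹) ∈ Z(G) for all g ∈ G and all h ∈ Z(G). -/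
theorem stmt9 {G : Type*} (H : HomGroup G) (hreg : H.IsRegular) :
    H.IsHomSubgroup {g | ∀ x, H.mul g x = H.mul x g} ∧
      ∀ g, ∀ h ∈ {g : G | ∀ x, H.mul g x = H.mul x g},
        H.mul (H.mul g h) (H.α (H.inv g)) ∈ {g : G | ∀ x, H.mul g x = H.mul x g} := by

  obtain ⟨⟨αinj, αsurj⟩, hinv⟩ := hreg
  -- right cancellation
  have cancel : ∀ a b c : G, H.mul a c = H.mul b c → a = b := by
    intro a b c hac
    have h1 : H.mul (H.α a) (H.mul c (H.inv c)) = H.mul (H.α b) (H.mul c (H.inv c)) := by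
      rw [H.hom_assoc, H.hom_assoc, hac]
    rw [(hinv c).1, H.mul_e, H.mul_e] at h1
    exact αinj (αinj h1)
  -- center closed under α
  have αcent : ∀ h : G, (∀ x, H.mul h x = H.mul x h) → ∀ x, H.mul (H.α h) x = H.mul x (H.α h) := by
    intro h hc x
    obtain ⟨y, rfl⟩ := αsurj x
    rw [← H.α_mul, ← H.α_mul, hc]
  refine ⟨⟨?_, ?_, ?_⟩, ?_⟩
  · intro x; rw [H.mul_e, H.e_mul]
  · intro h hc x
    apply cancel _ _ (H.α h)
    have h1 : H.mul (H.mul x (H.inv h)) (H.α h) = H.α (H.α x) := by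
      rw [← H.hom_assoc, (hinv h).2, H.mul_e]
    have h2 : H.mul (H.mul (H.inv h) x) (H.α h) = H.α (H.α x) := by
      rw [← H.hom_assoc, ← hc x, H.hom_assoc, (hinv h).2, H.e_mul]
    rw [h1, h2]
  · intro h₁ hc₁ h₂ hc₂ x
    obtain ⟨y, rfl⟩ := αsurj x
    rw [H.hom_assoc, ← hc₁ y, ← H.hom_assoc, ← H.hom_assoc, hc₂ y]
  · intro g h hc
    have key : H.mul (H.mul g h) (H.α (H.inv g)) = H.α (H.α h) := by
      rw [← hc g, ← H.hom_assoc, (hinv g).1, H.mul_e]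
    rw [Set.mem_setOf_eq, key]
    exact αcent _ (αcent _ hc)
end

section
/- Let f : G → H be a homomorphism of regular Hom-groups (G, ·, e_G, α_G) and (H, ·, e_H, α_H) with f(e_G) = e_H. Then Ker(f) = {g ∈ G : f(g) = e_H} is a normal Hom-subgroup of G: it contains e_G, is closed under · and under inverses, and (g·k)·α_G(g⁻¹) ∈ Ker(f) for all g ∈ G and all k ∈ Ker(f). -/
theorem stmt11 {G H : Type*} (Hg : HomGroup G) (Hh : HomGroup H)
    (hGreg : Hg.IsRegular) (hHreg : Hh.IsRegular)
    (f : G → H) (hf_mul : ∀ g g', f (Hg.mul g g') = Hh.mul (f g) (f g'))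
    (hf_α : ∀ g, f (Hg.α g) = Hh.α (f g)) (hf_e : f Hg.e = Hh.e) :
    Hg.IsHomSubgroup {g | f g = Hh.e} ∧
      ∀ g, ∀ k ∈ {g : G | f g = Hh.e},
        Hg.mul (Hg.mul g k) (Hg.α (Hg.inv g)) ∈ {g : G | f g = Hh.e} := by
  obtain ⟨hαinj, -⟩ := hHreg
  have hinv : ∀ g ∈ {g : G | f g = Hh.e}, f (Hg.inv g) = Hh.e := by
    intro g hg
    have h1 : f (Hg.mul g (Hg.inv g)) = Hh.e := by rw [(hGreg.2 g).1, hf_e]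
    rw [hf_mul, hg, Hh.e_mul] at h1
    exact hαinj.injective (by rw [h1, Hh.α_e])
  refine ⟨⟨hf_e, hinv, ?_⟩, ?_⟩
  · intro h₁ h1 h₂ h2
    show f _ = _
    rw [hf_mul, h1, h2, Hh.mul_e, Hh.α_e]
  · intro g k hk
    show f _ = _
    rw [hf_mul, hf_mul, hk, Hh.mul_e, hf_α, ← Hh.α_mul, ← hf_mul,
      (hGreg.2 g).1, hf_e, Hh.α_e]
end

section
/- Let f : G → H be a homomorphism of regular Hom-groups (G, ·, e_G, α_G) and (H, ·, e_H, α_H) with f(e_G) = e_H. Then: (1) if N is a normal Hom-subgroup of G, then f(N) is a normal Hom-subgroup of f(G), i.e. (h·f(n))·α_H(h⁻¹) ∈ f(N) for all h ∈ f(G) and n ∈ N; (2) if M ⊆ H satisfies (h·m)·α_H(h⁻¹) ∈ M for all h ∈ f(G) and m ∈ M, then (g·x)·α_G(g⁻¹) ∈ f⁻¹(M) for all g ∈ G and x ∈ f⁻¹(M). -/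
/-- In a regular Hom-group, inverses are unique. -/
lemma HomGroup.inv_unique {G : Type*} (Hg : HomGroup G) (hreg : Hg.IsRegular)
    (g a : G) (h1 : Hg.mul g a = Hg.e) (h2 : Hg.mul a g = Hg.e) : a = Hg.inv g := by
  obtain ⟨⟨hinj, _⟩, hinv⟩ := hreg
  have key : Hg.mul (Hg.α a) (Hg.mul g (Hg.inv g)) =
      Hg.mul (Hg.mul a g) (Hg.α (Hg.inv g)) := Hg.hom_assoc a g (Hg.inv g)
  rw [(hinv g).1, h2, Hg.mul_e, Hg.e_mul] at key
  exact hinj (hinj key)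

theorem stmt12 {G H : Type*} (Hg : HomGroup G) (Hh : HomGroup H)
    (hGreg : Hg.IsRegular) (hHreg : Hh.IsRegular)
    (f : G → H) (hf_mul : ∀ g g', f (Hg.mul g g') = Hh.mul (f g) (f g'))
    (hf_α : ∀ g, f (Hg.α g) = Hh.α (f g)) (hf_e : f Hg.e = Hh.e) :
    (∀ N : Set G, Hg.IsHomSubgroup N →
      (∀ g, ∀ n ∈ N, Hg.mul (Hg.mul g n) (Hg.α (Hg.inv g)) ∈ N) →
      ∀ h ∈ f '' Set.univ, ∀ n ∈ N,
        Hh.mul (Hh.mul h (f n)) (Hh.α (Hh.inv h)) ∈ f '' N) ∧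
    (∀ M : Set H,
      (∀ h ∈ f '' Set.univ, ∀ m ∈ M, Hh.mul (Hh.mul h m) (Hh.α (Hh.inv h)) ∈ M) →
      ∀ g, ∀ x ∈ f ⁻¹' M, Hg.mul (Hg.mul g x) (Hg.α (Hg.inv g)) ∈ f ⁻¹' M) := by
  have hfinv : ∀ g, f (Hg.inv g) = Hh.inv (f g) := by
    intro g
    apply Hh.inv_unique hHreg
    · rw [← hf_mul, (hGreg.2 g).1, hf_e]
    · rw [← hf_mul, (hGreg.2 g).2, hf_e]
  constructor
  · rintro N hN hnorm h ⟨g, -, rfl⟩ n hn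
    refine ⟨Hg.mul (Hg.mul g n) (Hg.α (Hg.inv g)), hnorm g n hn, ?_⟩
    rw [hf_mul, hf_mul, hf_α, hfinv]
  · intro M hM g x hx
    show f _ ∈ M
    rw [hf_mul, hf_mul, hf_α, hfinv]
    exact hM (f g) ⟨g, trivial, rfl⟩ (f x) hx
end

section
/- Let H be a Hom-subgroup of a regular Hom-group (G, ·, e, α) with α(H) = H, and let g, g' ∈ G. Then gH = g'H (where gH = {g·h : h ∈ H}) if and only if g⁻¹·g' ∈ H. -/
theorem stmt13 {G : Type*} (Hg : HomGroup G) (hreg : Hg.IsRegular)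
    (H : Set G) (hH : Hg.IsHomSubgroup H) (hαH : Hg.α '' H = H)
    (g g' : G) :
    (fun h => Hg.mul g h) '' H = (fun h => Hg.mul g' h) '' H ↔
      Hg.mul (Hg.inv g) g' ∈ H := by
  obtain ⟨hbij, hinv⟩ := hreg
  have : Nonempty G := ⟨Hg.e⟩
  set β := Function.invFun Hg.α with hβ
  have αinj : Function.Injective Hg.α := hbij.1
  have hβα : ∀ x, β (Hg.α x) = x := Function.leftInverse_invFun hbij.1
  have hαβ : ∀ x, Hg.α (β x) = x := Function.rightInverse_invFun hbij.2
  have βmul : ∀ a b, β (Hg.mul a b) = Hg.mul (β a) (β b) := by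
    intro a b; apply αinj
    rw [hαβ, Hg.α_mul, hαβ, hαβ]
  have βe : β Hg.e = Hg.e := by apply αinj; rw [hαβ, Hg.α_e]
  have memβ : ∀ x, x ∈ H ↔ β x ∈ H := by
    intro x
    constructor
    · intro hx
      rw [← hαH] at hx
      obtain ⟨y, hy, rfl⟩ := hx
      rwa [hβα]
    · intro hx
      have hx' : Hg.α (β x) ∈ Hg.α '' H := ⟨β x, hx, rfl⟩
      rw [hαβ x, hαH] at hx'
      exact hx'
  have inv_unique : ∀ a b, Hg.mul a b = Hg.e → Hg.mul b a = Hg.e → b = Hg.inv a := by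
    intro a b h1 h2
    have h3 := Hg.hom_assoc b a (Hg.inv a)
    rw [h2, (hinv a).1, Hg.mul_e, Hg.e_mul] at h3
    exact αinj (αinj h3)
  have inv_inv : ∀ a, Hg.inv (Hg.inv a) = a := by
    intro a
    symm
    exact inv_unique (Hg.inv a) a (hinv a).2 (hinv a).1
  have cancel : ∀ a c, Hg.mul a (β (Hg.mul (Hg.inv a) c)) = Hg.α c := by
    intro a c
    have h := Hg.hom_assoc (β a) (β (Hg.inv a)) (β c)
    simp only [hαβ] at h
    rw [βmul, h, ← βmul, (hinv a).1, βe, Hg.e_mul]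
  have sub : ∀ a b : G, Hg.mul (Hg.inv b) a ∈ H →
      (fun h => Hg.mul a h) '' H ⊆ (fun h => Hg.mul b h) '' H := by
    intro a b hab x hx
    obtain ⟨h, hh, rfl⟩ := hx
    refine ⟨β (Hg.mul (β (Hg.mul (Hg.inv b) a)) h), ?_, ?_⟩
    · exact (memβ _).1 (hH.2.2 _ ((memβ _).1 hab) _ hh)
    · show Hg.mul b (β (Hg.mul (β (Hg.mul (Hg.inv b) a)) h)) = Hg.mul a h
      rw [βmul]
      have h2 := Hg.hom_assoc (β b) (β (β (Hg.mul (Hg.inv b) a))) (β h)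
      simp only [hαβ] at h2
      rw [h2, ← βmul, cancel, hβα]
  constructor
  · intro heq
    have hmem : Hg.α g ∈ (fun h => Hg.mul g' h) '' H := by
      rw [← heq]; exact ⟨Hg.e, hH.1, Hg.mul_e g⟩
    obtain ⟨h, hh, hgh⟩ := hmem
    have h1 : Hg.mul (Hg.inv g') g = Hg.α h := by
      apply αinj
      rw [Hg.α_mul, ← hgh, Hg.hom_assoc, (hinv g').2, Hg.e_mul]
    have h2 : Hg.mul (Hg.inv g') g ∈ H := by
      rw [h1, ← hαH]; exact ⟨h, hh, rfl⟩
    have h3 : Hg.mul (Hg.inv g) g' = Hg.inv (Hg.mul (Hg.inv g') g) := by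
      rw [Hg.inv_anti, inv_inv]
    rw [h3]; exact hH.2.1 _ h2
  · intro hmem
    have hmem' : Hg.mul (Hg.inv g') g ∈ H := by
      have h4 := hH.2.1 _ hmem
      rwa [Hg.inv_anti, inv_inv] at h4
    exact Set.Subset.antisymm (sub g g' hmem') (sub g' g hmem)
end

section
/- Let (G, ·, e, α) be a regular Hom-group and for g, h ∈ G write [g, h] = (g⁻¹·h⁻¹)·(g·h). Then the set of commutators is stable under Hom-conjugation: for all s, g, h ∈ G, (s·[g,h])·α(s⁻¹) = [ (α⁻²(s)·g)·α⁻¹(s⁻¹), (α⁻²(s)·h)·α⁻¹(s⁻¹) ]; in particular for all s, g, h ∈ G there exist g', h' ∈ G with (s·[g,h])·α(s⁻¹) = [g', h']. -/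
theorem stmt14 {G : Type*} (H : HomGroup G) (hreg : H.IsRegular)
    (β : G → G) (hβl : Function.LeftInverse β H.α) (hβr : Function.RightInverse β H.α)
    (comm : G → G → G)
    (hcomm : ∀ g h, comm g h = H.mul (H.mul (H.inv g) (H.inv h)) (H.mul g h)) :
    ∀ s g h,
      H.mul (H.mul s (comm g h)) (H.α (H.inv s)) =
        comm (H.mul (H.mul (β (β s)) g) (β (H.inv s)))
             (H.mul (H.mul (β (β s)) h) (β (H.inv s))) ∧
      ∃ g' h', H.mul (H.mul s (comm g h)) (H.α (H.inv s)) = comm g' h' := by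

  have hinv := hreg.2
  have hαinj : Function.Injective H.α := hβl.injective
  have hab : ∀ x, H.α (β x) = x := hβr
  have hba : ∀ x, β (H.α x) = x := hβl
  have β_e : β H.e = H.e := by have := hba H.e; rwa [H.α_e] at this
  have assoc1 : ∀ g h k, H.mul g (H.mul h (β k)) = H.mul (H.mul (β g) h) k := by
    intro g h k
    have := H.hom_assoc (β g) h (β k)
    rwa [hβr, hβr] at this
  letI : Group G := {
    mul := fun a b => β (H.mul a b)
    one := H.e
    inv := H.inv
    mul_assoc := by
      intro a b c
      show β (H.mul (β (H.mul a b)) c) = β (H.mul a (β (H.mul b c)))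
      congr 1
      have hb : β (H.mul a b) = H.mul (β a) (β b) := by
        apply hαinj; rw [hβr, H.α_mul, hβr, hβr]
      have hc : β (H.mul b c) = H.mul (β b) (β c) := by
        apply hαinj; rw [hβr, H.α_mul, hβr, hβr]
      rw [hb, hc, ← assoc1 a (β b) c]
    one_mul := by intro a; show β (H.mul H.e a) = a; rw [H.e_mul, hβl]
    mul_one := by intro a; show β (H.mul a H.e) = a; rw [H.mul_e, hβl]
    inv_mul_cancel := by
      intro a
      show β (H.mul (H.inv a) a) = H.e
      rw [(hinv a).2, β_e] }
  have mulEq : ∀ a b, H.mul a b = H.α a * H.α b := by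
    intro a b
    show H.mul a b = β (H.mul (H.α a) (H.α b))
    rw [← H.α_mul, hβl]
  have invEq : ∀ a, H.inv a = a⁻¹ := by
    intro a
    apply eq_inv_of_mul_eq_one_right
    show β (H.mul a (H.inv a)) = H.e
    rw [(hinv a).1, β_e]
  have αmul : ∀ a b, H.α (a * b) = H.α a * H.α b := by
    intro a b
    show H.α (β (H.mul a b)) = β (H.mul (H.α a) (H.α b))
    rw [hβr, ← H.α_mul, hβl]
  have αone : H.α (1 : G) = 1 := H.α_e
  have αinv : ∀ a, H.α a⁻¹ = (H.α a)⁻¹ := by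
    intro a
    apply eq_inv_of_mul_eq_one_left
    rw [← αmul, inv_mul_cancel, αone]
  have βinv : ∀ a, β a⁻¹ = (β a)⁻¹ := by
    intro a
    apply hαinj
    rw [hβr, αinv, hβr]
  intro s g h
  have key : H.mul (H.mul s (comm g h)) (H.α (H.inv s)) =
      comm (H.mul (H.mul (β (β s)) g) (β (H.inv s)))
           (H.mul (H.mul (β (β s)) h) (β (H.inv s))) := by
    simp only [hcomm, mulEq, invEq, αmul, αinv, βinv, hab, hba]
    group
  exact ⟨key, _, _, key⟩
end

section
/- Let (A, ·, e_A, α_A) and (B, ·, e_B, α_B) be regular Hom-groups, let (C, +, 0, α_C) be a regular Hom-group written additively (not assumed commutative), and let f : A × B → C be a Hom-bilinear map. Then any two elements of the image of f commute: for all a₁, a₂ ∈ A and b₁, b₂ ∈ B, f(a₁, b₂) + f(a₂, b₁) = f(a₂, b₁) + f(a₁, b₂). -/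
/-- A Hom-bilinear map from the product of two Hom-groups into a third
(written additively in the paper). -/
def HomBilinear {A B C : Type*} (HA : HomGroup A) (HB : HomGroup B) (HC : HomGroup C)
    (f : A → B → C) : Prop :=
  (∀ a₁ a₂ b, f (HA.mul a₁ a₂) (HB.α b) = HC.mul (f a₁ b) (f a₂ b)) ∧
  (∀ a b₁ b₂, f (HA.α a) (HB.mul b₁ b₂) = HC.mul (f a b₁) (f a b₂)) ∧
  (∀ a b, f (HA.α a) (HB.α b) = HC.α (f a b))

theorem stmt17 {A B C : Type*} (HA : HomGroup A) (HB : HomGroup B) (HC : HomGroup C)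
    (hA : HA.IsRegular) (hB : HB.IsRegular) (hC : HC.IsRegular)
    (f : A → B → C) (hf : HomBilinear HA HB HC f) :
    ∀ a₁ a₂ b₁ b₂,
      HC.mul (f a₁ b₂) (f a₂ b₁) = HC.mul (f a₂ b₁) (f a₁ b₂) := by
  obtain ⟨hf1, hf2, hf3⟩ := hf
  obtain ⟨⟨hCinj, hCsurj⟩, hCinv⟩ := hC
  have cancel_left : ∀ g h h' : C, HC.mul g h = HC.mul g h' → h = h' := by
    intro g h h' hgh
    have key : ∀ x : C, HC.mul (HC.α (HC.inv g)) (HC.mul g x) = HC.α (HC.α x) := by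
      intro x
      rw [HC.hom_assoc, (hCinv g).2, HC.e_mul]
    have h2 := key h
    rw [hgh, key h'] at h2
    exact (hCinj (hCinj h2)).symm
  have cancel_right : ∀ g h h' : C, HC.mul h g = HC.mul h' g → h = h' := by
    intro g h h' hgh
    have key : ∀ x : C, HC.mul (HC.mul x g) (HC.α (HC.inv g)) = HC.α (HC.α x) := by
      intro x
      rw [← HC.hom_assoc, (hCinv g).1, HC.mul_e]
    have h2 := key h
    rw [hgh, key h'] at h2
    exact (hCinj (hCinj h2)).symm
  have inter : ∀ a₁ a₂ b₁ b₂,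
      HC.mul (HC.mul (f a₁ b₁) (f a₁ b₂)) (HC.mul (f a₂ b₁) (f a₂ b₂)) =
      HC.mul (HC.mul (f a₁ b₁) (f a₂ b₁)) (HC.mul (f a₁ b₂) (f a₂ b₂)) := by
    intro a₁ a₂ b₁ b₂
    have L : f (HA.α (HA.mul a₁ a₂)) (HB.α (HB.mul b₁ b₂)) =
        HC.mul (HC.mul (f a₁ b₁) (f a₁ b₂)) (HC.mul (f a₂ b₁) (f a₂ b₂)) := by
      rw [HA.α_mul, hf1, hf2, hf2]
    have R : f (HA.α (HA.mul a₁ a₂)) (HB.α (HB.mul b₁ b₂)) =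
        HC.mul (HC.mul (f a₁ b₁) (f a₂ b₁)) (HC.mul (f a₁ b₂) (f a₂ b₂)) := by
      rw [HB.α_mul, hf2, hf1, hf1]
    rw [← L, R]
  intro a₁ a₂ b₁ b₂
  set p := f a₁ b₁
  set q := f a₁ b₂
  set r := f a₂ b₁
  set s := f a₂ b₂
  have h0 := inter a₁ a₂ b₁ b₂
  obtain ⟨t, ht⟩ := hCsurj (HC.mul r s)
  obtain ⟨u, hu⟩ := hCsurj (HC.mul q s)
  rw [← ht, ← hu, ← HC.hom_assoc p q t, ← HC.hom_assoc p r u] at h0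
  have h1 := cancel_left _ _ _ h0
  have h2 := congrArg HC.α h1
  rw [HC.α_mul, HC.α_mul, ht, hu, HC.hom_assoc, HC.hom_assoc] at h2
  exact cancel_right _ _ _ h2
end

section
/- Let (A, ·, e_A, α_A) and (B, ·, e_B, α_B) be regular Hom-groups, let (C, +, 0, α_C) be a regular Hom-group written additively (not assumed commutative), and let f : A × B → C be a Hom-bilinear map. Then f vanishes on commutators in either argument: for all a₁, a₂ ∈ A and b ∈ B, f((a₁⁻¹·a₂⁻¹)·(a₁·a₂), b) = 0, and for all a ∈ A and b₁, b₂ ∈ B, f(a, (b₁⁻¹·b₂⁻¹)·(b₁·b₂)) = 0. -/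
/-- Left cancellation in a regular Hom-group. -/
lemma HomGroup.lcancel {G : Type*} (H : HomGroup G) (h : H.IsRegular) {a u v : G}
    (huv : H.mul a u = H.mul a v) : u = v := by
  have h2 : ∀ w, H.mul (H.α (H.inv a)) (H.mul a w) = H.α (H.α w) := by
    intro w
    rw [H.hom_assoc, (h.2 a).2, H.e_mul]
  have h3 : H.α (H.α u) = H.α (H.α v) := by
    rw [← h2 u, ← h2 v, huv]
  exact h.1.injective (h.1.injective h3)

/-- Right cancellation in a regular Hom-group. -/
lemma HomGroup.rcancel {G : Type*} (H : HomGroup G) (h : H.IsRegular) {a u v : G}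
    (huv : H.mul u a = H.mul v a) : u = v := by
  have h2 : ∀ w, H.mul (H.mul w a) (H.α (H.inv a)) = H.α (H.α w) := by
    intro w
    rw [← H.hom_assoc, (h.2 a).1, H.mul_e]
  have h3 : H.α (H.α u) = H.α (H.α v) := by
    rw [← h2 u, ← h2 v, huv]
  exact h.1.injective (h.1.injective h3)

/-- If `(x+x)+(y+y) = (x+y)+(x+y)` in a regular Hom-group, then `x+y = y+x`. -/
lemma HomGroup.comm_core {C : Type*} (HC : HomGroup C) (hC : HC.IsRegular) {x y : C}
    (E : HC.mul (HC.mul x x) (HC.mul y y) = HC.mul (HC.mul x y) (HC.mul x y)) :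
    HC.mul x y = HC.mul y x := by
  obtain ⟨x', rfl⟩ := hC.1.2 x
  obtain ⟨y', rfl⟩ := hC.1.2 y
  have e1 : HC.mul (HC.α y') (HC.α y') = HC.α (HC.mul y' y') := (HC.α_mul _ _).symm
  have e2 : HC.mul (HC.α x') (HC.α y') = HC.α (HC.mul x' y') := (HC.α_mul _ _).symm
  rw [e1, ← HC.hom_assoc] at E
  nth_rewrite 2 [e2] at E
  rw [← HC.hom_assoc] at E
  have h2 := HC.lcancel hC E
  rw [HC.hom_assoc, HC.hom_assoc] at h2
  have h3 := HC.rcancel hC h2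
  rw [← HC.α_mul, ← HC.α_mul, h3]

theorem stmt18 {A B C : Type*} (HA : HomGroup A) (HB : HomGroup B) (HC : HomGroup C)
    (hA : HA.IsRegular) (hB : HB.IsRegular) (hC : HC.IsRegular)
    (f : A → B → C) (hf : HomBilinear HA HB HC f) :
    (∀ a₁ a₂ b,
      f (HA.mul (HA.mul (HA.inv a₁) (HA.inv a₂)) (HA.mul a₁ a₂)) b = HC.e) ∧
    (∀ a b₁ b₂,
      f a (HB.mul (HB.mul (HB.inv b₁) (HB.inv b₂)) (HB.mul b₁ b₂)) = HC.e) := by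
  obtain ⟨fA, fB, fα⟩ := hf
  -- f vanishes when the first argument is e
  have hfe : ∀ b, f HA.e b = HC.e := by
    intro b
    have h1 : HC.mul (f HA.e b) (f HA.e b) = HC.mul (f HA.e b) HC.e := by
      have h2 : f (HA.α HA.e) (HB.α b) = HC.α (f HA.e b) := fα HA.e b
      rw [HA.α_e] at h2
      rw [← fA HA.e HA.e b, HA.mul_e, HA.α_e, HC.mul_e]
      exact h2
    exact HC.lcancel hC h1
  -- f vanishes when the second argument is e
  have hfeB : ∀ a, f a HB.e = HC.e := by
    intro a
    have h1 : HC.mul (f a HB.e) (f a HB.e) = HC.mul (f a HB.e) HC.e := by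
      have h2 : f (HA.α a) (HB.α HB.e) = HC.α (f a HB.e) := fα a HB.e
      rw [HB.α_e] at h2
      rw [← fB a HB.e HB.e, HB.mul_e, HB.α_e, HC.mul_e]
      exact h2
    exact HC.lcancel hC h1
  -- f turns inverses in the first argument into inverses
  have hinvA : ∀ a b, f (HA.inv a) b = HC.inv (f a b) := by
    intro a b
    have h1 : HC.mul (f a b) (f (HA.inv a) b) = HC.mul (f a b) (HC.inv (f a b)) := by
      rw [← fA a (HA.inv a) b, (hA.2 a).1, hfe, (hC.2 (f a b)).1]
    exact HC.lcancel hC h1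
  -- f turns inverses in the second argument into inverses
  have hinvB : ∀ a b, f a (HB.inv b) = HC.inv (f a b) := by
    intro a b
    have h1 : HC.mul (f a b) (f a (HB.inv b)) = HC.mul (f a b) (HC.inv (f a b)) := by
      rw [← fB a b (HB.inv b), (hB.2 b).1, hfeB, (hC.2 (f a b)).1]
    exact HC.lcancel hC h1
  -- values of f with a common second argument commute
  have hcomm : ∀ a₁ a₂ b, HC.mul (f a₁ b) (f a₂ b) = HC.mul (f a₂ b) (f a₁ b) := by
    intro a₁ a₂ b
    obtain ⟨b, rfl⟩ := hB.1.2 b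
    have E : HC.mul (HC.mul (f a₁ (HB.α b)) (f a₁ (HB.α b)))
               (HC.mul (f a₂ (HB.α b)) (f a₂ (HB.α b)))
        = HC.mul (HC.mul (f a₁ (HB.α b)) (f a₂ (HB.α b)))
            (HC.mul (f a₁ (HB.α b)) (f a₂ (HB.α b))) := by
      calc HC.mul (HC.mul (f a₁ (HB.α b)) (f a₁ (HB.α b)))
               (HC.mul (f a₂ (HB.α b)) (f a₂ (HB.α b)))
          = HC.mul (f (HA.α a₁) (HB.mul (HB.α b) (HB.α b)))
              (f (HA.α a₂) (HB.mul (HB.α b) (HB.α b))) := by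
            rw [fB, fB]
        _ = f (HA.mul (HA.α a₁) (HA.α a₂)) (HB.α (HB.mul (HB.α b) (HB.α b))) :=
            (fA _ _ _).symm
        _ = f (HA.α (HA.mul a₁ a₂)) (HB.mul (HB.α (HB.α b)) (HB.α (HB.α b))) := by
            rw [HA.α_mul, HB.α_mul]
        _ = HC.mul (f (HA.mul a₁ a₂) (HB.α (HB.α b))) (f (HA.mul a₁ a₂) (HB.α (HB.α b))) :=
            fB _ _ _
        _ = HC.mul (HC.mul (f a₁ (HB.α b)) (f a₂ (HB.α b)))
              (HC.mul (f a₁ (HB.α b)) (f a₂ (HB.α b))) := by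
            rw [fA a₁ a₂ (HB.α b)]
    exact HC.comm_core hC E
  -- values of f with a common first argument commute
  have hcommB : ∀ a b₁ b₂, HC.mul (f a b₁) (f a b₂) = HC.mul (f a b₂) (f a b₁) := by
    intro a b₁ b₂
    obtain ⟨a, rfl⟩ := hA.1.2 a
    have E : HC.mul (HC.mul (f (HA.α a) b₁) (f (HA.α a) b₁))
               (HC.mul (f (HA.α a) b₂) (f (HA.α a) b₂))
        = HC.mul (HC.mul (f (HA.α a) b₁) (f (HA.α a) b₂))
            (HC.mul (f (HA.α a) b₁) (f (HA.α a) b₂)) := by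
      calc HC.mul (HC.mul (f (HA.α a) b₁) (f (HA.α a) b₁))
               (HC.mul (f (HA.α a) b₂) (f (HA.α a) b₂))
          = HC.mul (f (HA.mul (HA.α a) (HA.α a)) (HB.α b₁))
              (f (HA.mul (HA.α a) (HA.α a)) (HB.α b₂)) := by
            rw [fA, fA]
        _ = f (HA.α (HA.mul (HA.α a) (HA.α a))) (HB.mul (HB.α b₁) (HB.α b₂)) :=
            (fB _ _ _).symm
        _ = f (HA.mul (HA.α (HA.α a)) (HA.α (HA.α a))) (HB.α (HB.mul b₁ b₂)) := by
            rw [HA.α_mul, HB.α_mul]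
        _ = HC.mul (f (HA.α (HA.α a)) (HB.mul b₁ b₂)) (f (HA.α (HA.α a)) (HB.mul b₁ b₂)) :=
            fA _ _ _
        _ = HC.mul (HC.mul (f (HA.α a) b₁) (f (HA.α a) b₂))
              (HC.mul (f (HA.α a) b₁) (f (HA.α a) b₂)) := by
            rw [fB (HA.α a) b₁ b₂]
    exact HC.comm_core hC E
  constructor
  · intro a₁ a₂ b
    obtain ⟨b, rfl⟩ := hB.1.2 b
    obtain ⟨b, rfl⟩ := hB.1.2 b
    rw [fA (HA.mul (HA.inv a₁) (HA.inv a₂)) (HA.mul a₁ a₂) (HB.α b),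
      fA (HA.inv a₁) (HA.inv a₂) b, fA a₁ a₂ b, hinvA, hinvA, ← HC.inv_anti,
      hcomm a₂ a₁ b]
    exact (hC.2 _).2
  · intro a b₁ b₂
    obtain ⟨a, rfl⟩ := hA.1.2 a
    obtain ⟨a, rfl⟩ := hA.1.2 a
    rw [fB (HA.α a) (HB.mul (HB.inv b₁) (HB.inv b₂)) (HB.mul b₁ b₂),
      fB a (HB.inv b₁) (HB.inv b₂), fB a b₁ b₂, hinvB, hinvB, ← HC.inv_anti,
      hcommB a b₂ b₁]
    exact (hC.2 _).2
end

section
/- Let (A, +, ·, 0, 1, α) be a unitary regular α-Hom-ring of type (1). Then: (1) a·0 = 0·a = 0 for all a ∈ A; (2) for all a, b ∈ A, the additive inverse of a·b is given by (−a)·b = a·(−b) = −(a·b); (3) α(−a) = −α(a) for all a ∈ A. -/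
/-- A unitary regular α-Hom-ring of type (1). -/
structure HomRing1 (A : Type*) where
  add : A → A → A
  mul : A → A → A
  zero : A
  one : A
  α : A → A
  neg : A → A
  add_comm : ∀ x y, add x y = add y x
  add_hom_assoc : ∀ x y z, add (α x) (add y z) = add (add x y) (α z)
  α_add : ∀ x y, α (add x y) = add (α x) (α y)
  add_zero : ∀ x, add x zero = α x
  α_zero : α zero = zero
  add_neg : ∀ x, add x (neg x) = zero
  α_bij : Function.Bijective α
  α_mul : ∀ x y, α (mul x y) = mul (α x) (α y)
  mul_hom_assoc : ∀ x y z, mul (α x) (mul y z) = mul (mul x y) (α z)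
  left_distrib : ∀ x y z, mul (α x) (add y z) = add (mul x y) (mul x z)
  right_distrib : ∀ x y z, mul (add y z) (α x) = add (mul y x) (mul z x)
  mul_one : ∀ x, mul x one = α x
  one_mul : ∀ x, mul one x = α x
  α_one : α one = one

lemma HomRing1.cancel {A : Type*} (R : HomRing1 A) (x y z : A)
    (h : R.add x y = R.add x z) : y = z := by
  have e : ∀ w, R.add (R.α (R.neg x)) (R.add x w) = R.α (R.α w) := by
    intro w
    rw [R.add_hom_assoc, R.add_comm (R.neg x) x, R.add_neg, R.add_comm, R.add_zero]
  have h2 : R.α (R.α y) = R.α (R.α z) := by rw [← e y, ← e z, h]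
  exact R.α_bij.injective (R.α_bij.injective h2)

theorem stmt19 {A : Type*} (R : HomRing1 A) :
    (∀ a, R.mul a R.zero = R.zero ∧ R.mul R.zero a = R.zero) ∧
    (∀ a b, R.mul (R.neg a) b = R.neg (R.mul a b) ∧
      R.mul a (R.neg b) = R.neg (R.mul a b)) ∧
    (∀ a, R.α (R.neg a) = R.neg (R.α a)) := by
  have mul_zero : ∀ a, R.mul a R.zero = R.zero := by
    intro a
    apply R.cancel (R.mul a R.zero)
    rw [← R.left_distrib, R.add_zero R.zero, R.α_zero, R.add_zero, R.α_mul, R.α_zero]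
  have zero_mul : ∀ a, R.mul R.zero a = R.zero := by
    intro a
    apply R.cancel (R.mul R.zero a)
    rw [← R.right_distrib, R.add_zero R.zero, R.α_zero, R.add_zero, R.α_mul, R.α_zero]
  refine ⟨fun a => ⟨mul_zero a, zero_mul a⟩, fun a b => ⟨?_, ?_⟩, fun a => ?_⟩
  · apply R.cancel (R.mul a b)
    rw [← R.right_distrib, R.add_neg, zero_mul, R.add_neg]
  · apply R.cancel (R.mul a b)
    rw [← R.left_distrib, R.add_neg, mul_zero, R.add_neg]
  · apply R.cancel (R.α a)
    rw [← R.α_add, R.add_neg, R.α_zero, R.add_neg]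
end
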